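/- Define the potential Φ(u) of a node u in a rooted weighted tree as |L_b(u)| + 2⌊Σ_{(c,p)∈H(u)} log₂(s(p)/s(c))⌋ + Σ_{(c,p)∈L_w(u)} (6⌊log₂(s(p)/s(c))⌋ − 1), where H(u), L_b(u), L_w(u) are the heavy edges, light edges with black parent, and light edges with white parent on the root path of u. Then 0 ≤ Φ(u) ≤ max(0, 6⌊log₂(B/s(u))⌋ − 1), where B = s(root). -/
import Mathlib

/-- Abstract combinatorial core of the potential bound. -/
lemma aux19 (g : ℕ → ℝ) (S H Lb Lw : Finset ℕ)
    (hsplit : ∑ i ∈ S, g i = ∑ i ∈ H, g i + ∑ i ∈ Lb, g i + ∑ i ∈ Lw, g i)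
    (hgH : 0 ≤ ∑ i ∈ H, g i)
    (hgLb : ∀ i ∈ Lb, 1 ≤ g i) (hgLw : ∀ i ∈ Lw, 1 ≤ g i) :
    0 ≤ (Lb.card : ℤ) + 2 * ⌊∑ i ∈ H, g i⌋ + ∑ i ∈ Lw, (6 * ⌊g i⌋ - 1) ∧
      (Lb.card : ℤ) + 2 * ⌊∑ i ∈ H, g i⌋ + ∑ i ∈ Lw, (6 * ⌊g i⌋ - 1)
        ≤ max 0 (6 * ⌊∑ i ∈ S, g i⌋ - 1) := by
  set h : ℤ := ⌊∑ i ∈ H, g i⌋ with hh_def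
  set bsum : ℤ := ∑ i ∈ Lb, ⌊g i⌋ with hb_def
  set wsum : ℤ := ∑ i ∈ Lw, ⌊g i⌋ with hw_def
  have hh : 0 ≤ h := Int.floor_nonneg.mpr hgH
  have hfl1 : ∀ i ∈ Lb, (1 : ℤ) ≤ ⌊g i⌋ := fun i hi =>
    Int.le_floor.mpr (by exact_mod_cast hgLb i hi)
  have hfl2 : ∀ i ∈ Lw, (1 : ℤ) ≤ ⌊g i⌋ := fun i hi =>
    Int.le_floor.mpr (by exact_mod_cast hgLw i hi)
  have hb : (Lb.card : ℤ) ≤ bsum := by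
    have := Finset.card_nsmul_le_sum Lb (fun i => ⌊g i⌋) 1 hfl1
    simpa using this
  have hw : (Lw.card : ℤ) ≤ wsum := by
    have := Finset.card_nsmul_le_sum Lw (fun i => ⌊g i⌋) 1 hfl2
    simpa using this
  have hT : h + bsum + wsum ≤ ⌊∑ i ∈ S, g i⌋ := by
    rw [Int.le_floor, hsplit, hb_def, hw_def]
    push_cast
    refine add_le_add (add_le_add (Int.floor_le _)
      (Finset.sum_le_sum fun i _ => Int.floor_le _))
      (Finset.sum_le_sum fun i _ => Int.floor_le _)
  have hΦ : ∑ i ∈ Lw, (6 * ⌊g i⌋ - 1) = 6 * wsum - Lw.card := by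
    rw [Finset.sum_sub_distrib, ← Finset.mul_sum]
    simp [hw_def]
  rw [hΦ]
  constructor
  · have : (0 : ℤ) ≤ (Lb.card : ℤ) := Int.natCast_nonneg _
    have : (0 : ℤ) ≤ (Lw.card : ℤ) := Int.natCast_nonneg _
    omega
  · by_cases hone : 1 ≤ h + bsum + (Lw.card : ℤ)
    · refine le_trans ?_ (le_max_right _ _)
      have h0b : (0 : ℤ) ≤ (Lb.card : ℤ) := Int.natCast_nonneg _
      have h0w : (0 : ℤ) ≤ (Lw.card : ℤ) := Int.natCast_nonneg _
      omega
    · have h0b : (0 : ℤ) ≤ (Lb.card : ℤ) := Int.natCast_nonneg _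
      have h0w : (0 : ℤ) ≤ (Lw.card : ℤ) := Int.natCast_nonneg _
      have hLw0 : (Lw.card : ℤ) = 0 := by omega
      have hLwe : Lw = ∅ := Finset.card_eq_zero.mp (by exact_mod_cast hLw0)
      have hws : wsum = 0 := by simp [hw_def, hLwe]
      refine le_trans ?_ (le_max_left _ _)
      omega

/-- Bounds on the potential `Φ(u)`.  In a rooted black/white tree with positive subtree
sizes `s` that are monotone along parent edges and `s root = B`, the root path of `u` is
`u, parent u, …, parent^[d] u = root` (`d` minimal); the edge `(c,p) = (parent^[i] u,
parent^[i+1] u)` is heavy if `s c > s p / 2` (i.e. `2·s c > s p`) and light otherwise.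
With `H(u)`, `L_b(u)`, `L_w(u)` the heavy edges, light edges with black parent, and
light edges with white parent of the root path, the potential
`Φ(u) = |L_b(u)| + 2·⌊Σ_{(c,p)∈H(u)} log₂(s p / s c)⌋
      + Σ_{(c,p)∈L_w(u)} (6·⌊log₂(s p / s c)⌋ − 1)`
satisfies `0 ≤ Φ(u) ≤ max 0 (6·⌊log₂(B / s u)⌋ − 1)`. -/
theorem stmt19 {V : Type*} [Fintype V] (parent : V → V) (root : V)
    (hroot : parent root = root)
    (color : V → Bool) (s : V → ℕ) (B : ℕ)
    (hpos : ∀ v, 1 ≤ s v) (hmono : ∀ v, s v ≤ s (parent v)) (hB : s root = B)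
    (u : V) (d : ℕ) (hd : parent^[d] u = root) (hmin : ∀ m < d, parent^[m] u ≠ root) :
    0 ≤
      (((Finset.range d).filter (fun i =>
            2 * s (parent^[i] u) ≤ s (parent^[i + 1] u) ∧
              color (parent^[i + 1] u) = true)).card : ℤ)
        + 2 * ⌊∑ i ∈ (Finset.range d).filter (fun i =>
              s (parent^[i + 1] u) < 2 * s (parent^[i] u)),
            Real.logb 2 ((s (parent^[i + 1] u) : ℝ) / (s (parent^[i] u) : ℝ))⌋
        + ∑ i ∈ (Finset.range d).filter (fun i =>
              2 * s (parent^[i] u) ≤ s (parent^[i + 1] u) ∧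
                color (parent^[i + 1] u) = false),
            (6 * ⌊Real.logb 2 ((s (parent^[i + 1] u) : ℝ) / (s (parent^[i] u) : ℝ))⌋ - 1) ∧
    (((Finset.range d).filter (fun i =>
            2 * s (parent^[i] u) ≤ s (parent^[i + 1] u) ∧
              color (parent^[i + 1] u) = true)).card : ℤ)
        + 2 * ⌊∑ i ∈ (Finset.range d).filter (fun i =>
              s (parent^[i + 1] u) < 2 * s (parent^[i] u)),
            Real.logb 2 ((s (parent^[i + 1] u) : ℝ) / (s (parent^[i] u) : ℝ))⌋
        + ∑ i ∈ (Finset.range d).filter (fun i =>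
              2 * s (parent^[i] u) ≤ s (parent^[i + 1] u) ∧
                color (parent^[i + 1] u) = false),
            (6 * ⌊Real.logb 2 ((s (parent^[i + 1] u) : ℝ) / (s (parent^[i] u) : ℝ))⌋ - 1)
      ≤ max 0 (6 * ⌊Real.logb 2 ((B : ℝ) / (s u : ℝ))⌋ - 1) := by
  classical
  set g : ℕ → ℝ := fun i =>
    Real.logb 2 ((s (parent^[i + 1] u) : ℝ) / (s (parent^[i] u) : ℝ)) with hg
  have hspos : ∀ i : ℕ, (0 : ℝ) < (s (parent^[i] u) : ℝ) := fun i => by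
    exact_mod_cast hpos _
  -- telescoping
  have htele : Real.logb 2 ((B : ℝ) / (s u : ℝ)) = ∑ i ∈ Finset.range d, g i := by
    have : ∀ i : ℕ, g i = Real.logb 2 (s (parent^[i + 1] u)) -
        Real.logb 2 (s (parent^[i] u)) := fun i => by
      rw [hg]
      exact Real.logb_div (ne_of_gt (hspos (i + 1))) (ne_of_gt (hspos i))
    have hB1 : 1 ≤ B := hB ▸ hpos root
    have hsu : (s u : ℝ) ≠ 0 := by
      have := hpos u; positivity
    rw [Finset.sum_congr rfl fun i _ => this i,
      Finset.sum_range_sub (fun i => Real.logb 2 (s (parent^[i] u))) d,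
      hd, hB, Function.iterate_zero_apply,
      Real.logb_div (by exact_mod_cast Nat.one_le_iff_ne_zero.mp hB1) hsu]
  rw [htele]
  -- partition of range d
  have hsplit : ∑ i ∈ Finset.range d, g i =
      ∑ i ∈ (Finset.range d).filter (fun i =>
          s (parent^[i + 1] u) < 2 * s (parent^[i] u)), g i
        + ∑ i ∈ (Finset.range d).filter (fun i =>
            2 * s (parent^[i] u) ≤ s (parent^[i + 1] u) ∧
              color (parent^[i + 1] u) = true), g i
        + ∑ i ∈ (Finset.range d).filter (fun i =>
            2 * s (parent^[i] u) ≤ s (parent^[i + 1] u) ∧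
              color (parent^[i + 1] u) = false), g i := by
    rw [← Finset.sum_filter_add_sum_filter_not (Finset.range d)
      (fun i => s (parent^[i + 1] u) < 2 * s (parent^[i] u)) g]
    have hnot : (Finset.range d).filter
        (fun i => ¬ s (parent^[i + 1] u) < 2 * s (parent^[i] u)) =
        (Finset.range d).filter
          (fun i => 2 * s (parent^[i] u) ≤ s (parent^[i + 1] u)) := by
      apply Finset.filter_congr
      intro i _
      simp [not_lt]
    rw [hnot, ← Finset.sum_filter_add_sum_filter_not ((Finset.range d).filter
      (fun i => 2 * s (parent^[i] u) ≤ s (parent^[i + 1] u)))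
      (fun i => color (parent^[i + 1] u) = true) g,
      Finset.filter_filter, Finset.filter_filter, add_assoc]
    have hc : (Finset.range d).filter (fun i =>
        2 * s (parent^[i] u) ≤ s (parent^[i + 1] u) ∧
          ¬ color (parent^[i + 1] u) = true) =
        (Finset.range d).filter (fun i =>
          2 * s (parent^[i] u) ≤ s (parent^[i + 1] u) ∧
            color (parent^[i + 1] u) = false) := by
      apply Finset.filter_congr
      intro i _
      simp
    rw [hc]
  have hmono' : ∀ i : ℕ, s (parent^[i] u) ≤ s (parent^[i + 1] u) := fun i => by
    rw [Function.iterate_succ_apply']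
    exact hmono _
  have hgpos : ∀ i : ℕ, 0 ≤ g i := fun i => by
    rw [hg]
    apply Real.logb_nonneg one_lt_two
    rw [le_div_iff₀ (hspos i), one_mul]
    exact_mod_cast hmono' i
  have hglight : ∀ i : ℕ, 2 * s (parent^[i] u) ≤ s (parent^[i + 1] u) → 1 ≤ g i := by
    intro i hi
    rw [hg]
    have h2 : (2 : ℝ) ≤ (s (parent^[i + 1] u) : ℝ) / (s (parent^[i] u) : ℝ) := by
      rw [le_div_iff₀ (hspos i)]
      exact_mod_cast hi
    calc (1 : ℝ) = Real.logb 2 2 := (Real.logb_self_eq_one one_lt_two).symm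
      _ ≤ _ := Real.logb_le_logb_of_le one_lt_two two_pos h2
  exact aux19 g (Finset.range d) _ _ _ hsplit
    (Finset.sum_nonneg fun i _ => hgpos i)
    (fun i hi => hglight i (Finset.mem_filter.mp hi).2.1)
    (fun i hi => hglight i (Finset.mem_filter.mp hi).2.1)
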